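/- Let p be an odd prime and let X be a PSCA(v, p, λ) with v not divisible by p. For a symbol w ∈ [v] and 0 ≤ j ≤ p−1, let y_w(j) = Σ_{i ≡ j (mod p)} d_w(i). Then y_w(j) ≡ 0 (mod p) for every j ∈ {0,…,p−1}. -/

import Mathlib

open scoped Classical

/-- A permutation `π` of `[v]` covers a sequence `s` of `t` distinct symbols if the
symbols appear in `π` in the given order, i.e. `π⁻¹(s 0) < ⋯ < π⁻¹(s (t-1))`. -/
def Covers {v t : ℕ} (π : Equiv.Perm (Fin v)) (s : Fin t → Fin v) : Prop :=
  StrictMono fun i => π.symm (s i)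

/-- `X` is a perfect sequence covering array PSCA(v, t, λ): every sequence of `t`
distinct symbols of `[v]` is covered by exactly `λ` permutations of `X` (with multiplicity). -/
def IsPSCA (v t l : ℕ) (X : Multiset (Equiv.Perm (Fin v))) : Prop :=
  ∀ s : Fin t → Fin v, Function.Injective s → X.countP (fun π => Covers π s) = l

/-- `dcount v X w j` is the number of permutations `π` in `X` (with multiplicity)
such that `π(j) = w`. -/
noncomputable def dcount (v : ℕ) (X : Multiset (Equiv.Perm (Fin v))) (w : Fin v) (j : ℕ) : ℕ :=
  X.countP fun π => ∃ p : Fin v, (p : ℕ) = j ∧ π p = w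

open Finset

lemma countP_eq {τ : Type*} (X : Multiset τ) (P : τ → Prop) [DecidablePred P] :
    X.countP P = (X.map fun t => if P t then 1 else 0).sum := by
  induction X using Multiset.induction with
  | empty => simp
  | cons t X ih => simp [Multiset.countP_cons, ih, add_comm]

lemma countP_sum {σ τ : Type*} (F : Finset σ) (X : Multiset τ) (P : σ → τ → Prop)
    [∀ s, DecidablePred (P s)] [∀ t, DecidablePred (fun s => P s t)] :
    ∑ s ∈ F, X.countP (P s) = (X.map fun t => (F.filter (fun s => P s t)).card).sum := by
  induction X using Multiset.induction with
  | empty => simp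
  | cons t X ih =>
    simp only [Multiset.countP_cons, Multiset.map_cons, Multiset.sum_cons,
      Finset.sum_add_distrib, ih, Finset.card_filter]
    omega

lemma countP_mul_sum {σ τ : Type*} (F : Finset σ) (X : Multiset τ) (P : σ → τ → Prop)
    (c : σ → ℕ) [∀ s, DecidablePred (P s)] [∀ t, DecidablePred (fun s => P s t)] :
    ∑ s ∈ F, X.countP (P s) * c s
      = (X.map fun t => ∑ s ∈ F.filter (fun s => P s t), c s).sum := by
  induction X using Multiset.induction with
  | empty => simp
  | cons t X ih =>
    simp only [Multiset.countP_cons, Multiset.map_cons, Multiset.sum_cons, add_mul,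
      Finset.sum_add_distrib, ih, Finset.sum_filter, ite_mul, one_mul, zero_mul]
    omega

lemma insert_count {t : ℕ} {α : Type*} [LinearOrder α] (g : Fin t → α) (b : α)
    (hb : ∀ r, g r ≠ b) :
    ((Finset.univ : Finset (Fin (t+1))).filter fun q => StrictMono (q.insertNth b g)).card
      = if StrictMono g then 1 else 0 := by
  classical
  have hmem : ∀ (q : Fin (t+1)) (x : Fin (t+1)),
      Fin.insertNth (α := fun _ => α) q b g x ∈ (insert b (Finset.image g Finset.univ) : Finset α) := by
    intro q x
    rcases eq_or_ne x q with rfl | hx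
    · rw [Fin.insertNth_apply_same]; exact Finset.mem_insert_self _ _
    · obtain ⟨r, rfl⟩ := Fin.exists_succAbove_eq hx
      rw [Fin.insertNth_apply_succAbove]
      exact Finset.mem_insert_of_mem (Finset.mem_image_of_mem g (Finset.mem_univ r))
  by_cases hg : StrictMono g
  · simp only [hg, if_true]
    have hbA : b ∉ Finset.image g Finset.univ := by
      simp only [Finset.mem_image, Finset.mem_univ, true_and, not_exists]
      exact hb
    have hA : (insert b (Finset.image g Finset.univ)).card = t + 1 := by
      rw [Finset.card_insert_of_notMem hbA,
        Finset.card_image_of_injective _ hg.injective, Finset.card_univ, Fintype.card_fin]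
    set A := insert b (Finset.image g Finset.univ) with hAdef
    set e := A.orderEmbOfFin hA with hedef
    have key : ∀ q : Fin (t+1), StrictMono (q.insertNth b g) → q.insertNth b g = ⇑e :=
      fun q hq => Finset.orderEmbOfFin_unique hA (hmem q) hq
    have hbmem : b ∈ A := Finset.mem_insert_self _ _
    have hbr : b ∈ Set.range ⇑e := by rw [Finset.range_orderEmbOfFin]; exact hbmem
    obtain ⟨q0, hq0⟩ := hbr
    have hAe : (A.erase b).card = t := by rw [Finset.card_erase_of_mem hbmem, hA]; rfl
    have hg_eq : g = ⇑((A.erase b).orderEmbOfFin hAe) := by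
      refine Finset.orderEmbOfFin_unique hAe (fun x => ?_) hg
      exact Finset.mem_erase.2 ⟨hb x,
        Finset.mem_insert_of_mem (Finset.mem_image_of_mem g (Finset.mem_univ x))⟩
    have he_eq : (fun r => e (q0.succAbove r)) = ⇑((A.erase b).orderEmbOfFin hAe) := by
      refine Finset.orderEmbOfFin_unique hAe (fun x => ?_)
        (e.strictMono.comp (Fin.strictMono_succAbove q0))
      refine Finset.mem_erase.2 ⟨fun h => ?_, Finset.orderEmbOfFin_mem _ _ _⟩
      exact Fin.succAbove_ne q0 x (e.injective (h.trans hq0.symm))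
    have hins : q0.insertNth b g = ⇑e := by
      funext x
      rcases eq_or_ne x q0 with rfl | hx
      · rw [Fin.insertNth_apply_same, hq0]
      · obtain ⟨r, rfl⟩ := Fin.exists_succAbove_eq hx
        rw [Fin.insertNth_apply_succAbove]
        exact (congrFun (hg_eq.trans he_eq.symm) r)
    rw [Finset.card_eq_one]
    refine ⟨q0, ?_⟩
    ext q
    simp only [Finset.mem_filter, Finset.mem_univ, true_and, Finset.mem_singleton]
    constructor
    · intro hq
      have h1 := key q hq
      have h2 : e q = b := by
        rw [← congrFun h1 q]; exact Fin.insertNth_apply_same (α := fun _ => α) q b g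
      exact e.injective (h2.trans hq0.symm)
    · rintro rfl
      rw [hins]; exact e.strictMono
  · simp only [hg, if_false, Finset.card_eq_zero]
    rw [Finset.filter_eq_empty_iff]
    intro q _ hq
    refine hg ?_
    have hgq : g = fun r => Fin.insertNth (α := fun _ => α) q b g (q.succAbove r) := by
      funext r; rw [Fin.insertNth_apply_succAbove]
    rw [hgq]
    exact hq.comp (Fin.strictMono_succAbove q)


lemma strictMono_snoc {n : ℕ} {α : Type*} [Preorder α] (g : Fin n → α) (x : α)
    (hg : StrictMono g) (hx : ∀ r, g r < x) : StrictMono (Fin.snoc g x) := by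
  intro i j hij
  by_cases hj : j = Fin.last n
  · subst hj
    obtain ⟨r, rfl⟩ := Fin.exists_castSucc_eq.mpr (Fin.ne_of_lt hij)
    rw [Fin.snoc_castSucc, Fin.snoc_last]
    exact hx r
  · obtain ⟨r, rfl⟩ := Fin.exists_castSucc_eq.mpr hj
    have hi : i ≠ Fin.last n := Fin.ne_of_lt (hij.trans (Fin.castSucc_lt_last r))
    obtain ⟨r', rfl⟩ := Fin.exists_castSucc_eq.mpr hi
    rw [Fin.snoc_castSucc, Fin.snoc_castSucc]
    exact hg (Fin.castSucc_lt_castSucc_iff.mp hij)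

lemma covers_card {v a : ℕ} (π : Equiv.Perm (Fin v)) (w : Fin v) :
    ((Finset.univ : Finset (Fin (a+1) → Fin v)).filter
        (fun s => (Function.Injective s ∧ s (Fin.last a) = w) ∧ Covers π s)).card
      = ((π.symm w : ℕ)).choose a := by
  classical
  rw [← Fin.card_Iio (b := π.symm w), ← Finset.card_powersetCard a (Finset.Iio (π.symm w))]
  refine Finset.card_bij (fun s _ => Finset.image (fun r : Fin a => π.symm (s (Fin.castSucc r)))
    Finset.univ) ?_ ?_ ?_
  · rintro s hs
    simp only [Finset.mem_filter, Finset.mem_univ, true_and] at hs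
    obtain ⟨⟨hinj, hlast⟩, hcov⟩ := hs
    have hfm : StrictMono fun r : Fin a => π.symm (s (Fin.castSucc r)) :=
      fun i j hij => hcov (Fin.castSucc_lt_castSucc_iff.mpr hij)
    rw [Finset.mem_powersetCard]
    constructor
    · intro x hx
      simp only [Finset.mem_image, Finset.mem_univ, true_and] at hx
      obtain ⟨r, rfl⟩ := hx
      rw [Finset.mem_Iio]
      simpa only [hlast] using hcov (Fin.castSucc_lt_last r)
    · show (Finset.image (fun r : Fin a => π.symm (s (Fin.castSucc r))) Finset.univ).card = a
      rw [Finset.card_image_of_injective _ hfm.injective, Finset.card_univ, Fintype.card_fin]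
  · intro s hs s' hs' heq
    simp only [Finset.mem_filter, Finset.mem_univ, true_and] at hs hs'
    obtain ⟨⟨hinj, hlast⟩, hcov⟩ := hs
    obtain ⟨⟨hinj', hlast'⟩, hcov'⟩ := hs'
    set f : Fin a → Fin v := fun r => π.symm (s (Fin.castSucc r)) with hf
    set f' : Fin a → Fin v := fun r => π.symm (s' (Fin.castSucc r)) with hf'
    have heq2 : Finset.image f Finset.univ = Finset.image f' Finset.univ := heq
    have hfm : StrictMono f := fun i j hij => hcov (Fin.castSucc_lt_castSucc_iff.mpr hij)
    have hfm' : StrictMono f' := fun i j hij => hcov' (Fin.castSucc_lt_castSucc_iff.mpr hij)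
    have hcard : (Finset.image f Finset.univ).card = a := by
      rw [Finset.card_image_of_injective _ hfm.injective, Finset.card_univ, Fintype.card_fin]
    have h1 : f = (Finset.image f Finset.univ).orderEmbOfFin hcard :=
      Finset.orderEmbOfFin_unique hcard
        (fun x => Finset.mem_image_of_mem f (Finset.mem_univ x)) hfm
    have h2 : f' = (Finset.image f Finset.univ).orderEmbOfFin hcard := by
      refine Finset.orderEmbOfFin_unique hcard (fun x => ?_) hfm'
      rw [heq2]; exact Finset.mem_image_of_mem f' (Finset.mem_univ x)
    have hff' : f = f' := h1.trans h2.symm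
    funext x
    by_cases hx : x = Fin.last a
    · subst hx; rw [hlast, hlast']
    · obtain ⟨r, rfl⟩ := Fin.exists_castSucc_eq.mpr hx
      have h3 : π.symm (s (Fin.castSucc r)) = π.symm (s' (Fin.castSucc r)) := congrFun hff' r
      have h4 := congrArg π h3
      simpa [Equiv.apply_symm_apply] using h4
  · intro A hA
    rw [Finset.mem_powersetCard] at hA
    obtain ⟨hsub, hcard⟩ := hA
    set e := A.orderEmbOfFin hcard with he
    set F : Fin (a+1) → Fin v := Fin.snoc ⇑e (π.symm w) with hF
    have hFm : StrictMono F := by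
      refine strictMono_snoc _ _ e.strictMono (fun r => ?_)
      have := hsub (Finset.orderEmbOfFin_mem A hcard r)
      rwa [Finset.mem_Iio] at this
    refine ⟨fun i => π (F i), Finset.mem_filter.2 ⟨Finset.mem_univ _, ⟨⟨?_, ?_⟩, ?_⟩⟩, ?_⟩
    · exact fun i j h => hFm.injective (π.injective h)
    · show π (F (Fin.last a)) = w
      rw [hF, Fin.snoc_last, Equiv.apply_symm_apply]
    · have h5 : (fun i => π.symm (π (F i))) = F := by
        funext i; rw [Equiv.symm_apply_apply]
      show StrictMono fun i => π.symm (π (F i))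
      rw [h5]; exact hFm
    · show Finset.image (fun r : Fin a => π.symm (π (F (Fin.castSucc r)))) Finset.univ = A
      have himg : (fun r : Fin a => π.symm (π (F (Fin.castSucc r)))) = fun r => e r := by
        funext r; rw [Equiv.symm_apply_apply, hF, Fin.snoc_castSucc]
      rw [himg]
      refine Finset.eq_of_subset_of_card_le (fun x hx => ?_) ?_
      · simp only [Finset.mem_image, Finset.mem_univ, true_and] at hx
        obtain ⟨r, rfl⟩ := hx
        exact Finset.orderEmbOfFin_mem A hcard r
      · rw [hcard, Finset.card_image_of_injective _ e.injective, Finset.card_univ,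
          Fintype.card_fin]





lemma comp_insertNth {n : ℕ} {α β : Type*} (f : α → β) (q : Fin (n+1)) (x : α) (s : Fin n → α) :
    (fun i => f (Fin.insertNth (α := fun _ => α) q x s i))
      = Fin.insertNth (α := fun _ => β) q (f x) (fun r => f (s r)) := by
  funext i
  rcases eq_or_ne i q with rfl | hi
  · rw [Fin.insertNth_apply_same, Fin.insertNth_apply_same]
  · obtain ⟨r, rfl⟩ := Fin.exists_succAbove_eq hi
    rw [Fin.insertNth_apply_succAbove, Fin.insertNth_apply_succAbove]

lemma insertNth_injective {n v : ℕ} {s : Fin n → Fin v} (hs : Function.Injective s) {x : Fin v}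
    (hx : ∀ r, s r ≠ x) (q : Fin (n+1)) :
    Function.Injective (Fin.insertNth (α := fun _ => Fin v) q x s) := by
  intro i j h
  rcases eq_or_ne i q with rfl | hi
  · rcases eq_or_ne j i with rfl | hj
    · rfl
    · obtain ⟨r, rfl⟩ := Fin.exists_succAbove_eq hj
      rw [Fin.insertNth_apply_same, Fin.insertNth_apply_succAbove] at h
      exact absurd h.symm (hx r)
  · obtain ⟨r, rfl⟩ := Fin.exists_succAbove_eq hi
    rcases eq_or_ne j q with rfl | hj
    · rw [Fin.insertNth_apply_same, Fin.insertNth_apply_succAbove] at h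
      exact absurd h (hx r)
    · obtain ⟨r', rfl⟩ := Fin.exists_succAbove_eq hj
      rw [Fin.insertNth_apply_succAbove, Fin.insertNth_apply_succAbove] at h
      rw [hs h]

lemma count_ext {v p l : ℕ} (htv : p ≤ v) (X : Multiset (Equiv.Perm (Fin v)))
    (hX : IsPSCA v p l X) :
    ∀ n t, t + n = p → ∀ s : Fin t → Fin v, Function.Injective s →
      X.countP (fun π => Covers π s) = l * ∏ x ∈ Finset.Icc (t+1) p, x := by
  intro n
  induction n with
  | zero =>
    intro t ht s hs
    have htp : t = p := by omega
    subst htp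
    rw [hX s hs, Finset.Icc_eq_empty (by omega), Finset.prod_empty, mul_one]
  | succ n ih =>
    intro t ht s hs
    have htp : t < p := by omega
    have htv' : t < v := lt_of_lt_of_le htp htv
    obtain ⟨x, hx⟩ : ∃ x : Fin v, x ∉ Finset.image s Finset.univ := by
      by_contra h
      push_neg at h
      have h2 : (Finset.image s Finset.univ : Finset (Fin v)) = Finset.univ :=
        Finset.eq_univ_iff_forall.mpr h
      have h3 := congrArg Finset.card h2
      rw [Finset.card_image_of_injective _ hs, Finset.card_univ, Fintype.card_fin,
        Finset.card_univ, Fintype.card_fin] at h3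
      omega
    have hxr : ∀ r, s r ≠ x := fun r h => hx (h ▸ Finset.mem_image_of_mem s (Finset.mem_univ r))
    have hsum := countP_sum (Finset.univ : Finset (Fin (t+1))) X
      (fun q π => Covers π (Fin.insertNth (α := fun _ => Fin v) q x s))
    have hL : ∑ q ∈ (Finset.univ : Finset (Fin (t+1))),
        X.countP (fun π => Covers π (Fin.insertNth (α := fun _ => Fin v) q x s))
        = (t+1) * (l * ∏ y ∈ Finset.Icc (t+2) p, y) := by
      rw [Finset.sum_congr rfl
        (fun q _ => ih (t+1) (by omega) _ (insertNth_injective hs hxr q)),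
        Finset.sum_const, Finset.card_univ, Fintype.card_fin, smul_eq_mul]
    have hR : (X.map fun π => ((Finset.univ : Finset (Fin (t+1))).filter
        (fun q => Covers π (Fin.insertNth (α := fun _ => Fin v) q x s))).card).sum
        = X.countP (fun π => Covers π s) := by
      rw [countP_eq]
      congr 1
      apply Multiset.map_congr rfl
      intro π _
      have hc : (fun q : Fin (t+1) => Covers π (Fin.insertNth (α := fun _ => Fin v) q x s))
          = fun q => StrictMono
            (Fin.insertNth (α := fun _ => Fin v) q (π.symm x) (fun r => π.symm (s r))) := by
        funext q
        exact congrArg StrictMono (comp_insertNth (⇑π.symm) q x s)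
      simp only [hc]
      rw [insert_count (fun r => π.symm (s r)) (π.symm x)
        (fun r h => hxr r (π.symm.injective h))]
      exact if_congr Iff.rfl rfl rfl
    have hprod : (t+1) * (l * ∏ y ∈ Finset.Icc (t+2) p, y)
        = l * ∏ y ∈ Finset.Icc (t+1) p, y := by
      have hmem : t + 1 ∈ Finset.Icc (t+1) p := by
        rw [Finset.mem_Icc]; omega
      rw [← Finset.mul_prod_erase (Finset.Icc (t+1) p) (fun y => y) hmem,
        Finset.Icc_erase_left, ← Finset.Icc_add_one_left_eq_Ioc]
      ring
    rw [← hprod, ← hL, hsum, hR]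

lemma Sa_card {v a : ℕ} (w : Fin v) :
    ((Finset.univ : Finset (Fin (a+1) → Fin v)).filter
      (fun s => Function.Injective s ∧ s (Fin.last a) = w)).card = (v-1).descFactorial a := by
  classical
  rw [← Fintype.card_subtype]
  have e : {s : Fin (a+1) → Fin v // Function.Injective s ∧ s (Fin.last a) = w}
      ≃ (Fin a ↪ {x : Fin v // x ≠ w}) := by
    refine Equiv.ofBijective (fun s => ⟨fun r => ⟨s.1 (Fin.castSucc r), fun h => ?_⟩,
      fun r r' h => ?_⟩) ⟨?_, ?_⟩
    · exact absurd (s.2.1 (h.trans s.2.2.symm)) (Fin.ne_of_lt (Fin.castSucc_lt_last r))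
    · exact Fin.castSucc_injective _ (s.2.1 (Subtype.ext_iff.mp h))
    · intro s s' h
      apply Subtype.ext
      funext i
      by_cases hi : i = Fin.last a
      · subst hi; rw [s.2.2, s'.2.2]
      · obtain ⟨r, rfl⟩ := Fin.exists_castSucc_eq.mpr hi
        exact Subtype.ext_iff.mp (DFunLike.congr_fun h r)
    · intro g
      have hinj : Function.Injective (Fin.snoc (fun r => (g r).1) w : Fin (a+1) → Fin v) := by
        intro i j h
        by_cases hi : i = Fin.last a
        · subst hi
          by_cases hj : j = Fin.last a
          · rw [hj]
          · obtain ⟨r, rfl⟩ := Fin.exists_castSucc_eq.mpr hj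
            rw [Fin.snoc_last, Fin.snoc_castSucc] at h
            exact absurd h.symm (g r).2
        · obtain ⟨r, rfl⟩ := Fin.exists_castSucc_eq.mpr hi
          by_cases hj : j = Fin.last a
          · subst hj
            rw [Fin.snoc_last, Fin.snoc_castSucc] at h
            exact absurd h (g r).2
          · obtain ⟨r', rfl⟩ := Fin.exists_castSucc_eq.mpr hj
            rw [Fin.snoc_castSucc, Fin.snoc_castSucc] at h
            rw [g.injective (Subtype.ext h)]
      refine ⟨⟨Fin.snoc (fun r => (g r).1) w, hinj, Fin.snoc_last _ _⟩, ?_⟩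
      ext r
      simp [Fin.snoc_castSucc]
  rw [Fintype.card_congr e, Fintype.card_embedding_eq, Fintype.card_fin]
  congr 1
  have h1 : Fintype.card {x : Fin v // x ≠ w} = v - 1 := by
    rw [Fintype.card_subtype_compl, Fintype.card_subtype_eq, Fintype.card_fin]
  exact h1

lemma dvd_descFactorial {v p : ℕ} (hp : 0 < p) (hpv : ¬ p ∣ v) (hpv' : p ≤ v) :
    p ∣ (v-1).descFactorial (p-1) := by
  have hm : v % p ≠ 0 := fun h => hpv (Nat.dvd_of_mod_eq_zero h)
  set m := v % p with hm'
  have hmlt : m < p := Nat.mod_lt _ hp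
  have hterm : v - 1 - (m - 1) = v - m := by omega
  have hdvd : p ∣ v - m := by
    have h := Nat.div_add_mod v p
    have h2 : v - m = p * (v / p) := by omega
    rw [h2]
    exact dvd_mul_right _ _
  rw [Nat.descFactorial_eq_prod_range]
  refine dvd_trans (hterm ▸ hdvd) (Finset.dvd_prod_of_mem _ ?_)
  rw [Finset.mem_range]
  omega










lemma DC {v p l : ℕ} (htv : p ≤ v) (X : Multiset (Equiv.Perm (Fin v)))
    (hX : IsPSCA v p l X) (w : Fin v) (a : ℕ) (hap : a + 1 ≤ p) :
    (X.map fun π => ((π.symm w : ℕ)).choose a).sum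
      = (v-1).descFactorial a * (l * ∏ y ∈ Finset.Icc (a+2) p, y) := by
  classical
  set Sa := (Finset.univ : Finset (Fin (a+1) → Fin v)).filter
      (fun s => Function.Injective s ∧ s (Fin.last a) = w) with hSa
  have h1 : ∀ s ∈ Sa, X.countP (fun π => Covers π s) = l * ∏ y ∈ Finset.Icc (a+2) p, y := by
    intro s hs
    rw [hSa, Finset.mem_filter] at hs
    exact count_ext htv X hX (p - (a+1)) (a+1) (by omega) s hs.2.1
  have h2 := countP_sum Sa X (fun s π => Covers π s)
  rw [Finset.sum_congr rfl h1, Finset.sum_const, smul_eq_mul] at h2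
  have h3 : (X.map fun π => (Sa.filter fun s => Covers π s).card).sum
      = (X.map fun π => ((π.symm w : ℕ)).choose a).sum := by
    congr 1
    apply Multiset.map_congr rfl
    intro π _
    rw [hSa, Finset.filter_filter]
    exact covers_card π w
  rw [← h3, ← h2, hSa, Sa_card w]

lemma lucas_small {p : ℕ} [Fact p.Prime] {a : ℕ} (ha : a < p) (i : ℕ) :
    ((i.choose a : ℕ) : ZMod p) = (((i % p).choose a : ℕ) : ZMod p) := by
  have h := Choose.choose_modEq_choose_mod_mul_choose_div_nat (p := p) (n := i) (k := a)
  rw [Nat.mod_eq_of_lt ha, Nat.div_eq_of_lt ha, Nat.choose_zero_right, mul_one] at h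
  exact (ZMod.natCast_eq_natCast_iff _ _ _).mpr h

/-- Theorem 2.3: for a PSCA(v, p, λ) with `p` an odd prime not dividing `v`,
the column sums of each residue class mod `p` of every symbol are divisible by `p`. -/
theorem stmt6 (v p l : ℕ) (hp : p.Prime) (hodd : Odd p) (hpv : ¬ p ∣ v) (hl : 1 ≤ l)
    (htv : p ≤ v)
    (X : Multiset (Equiv.Perm (Fin v))) (hX : IsPSCA v p l X)
    (w : Fin v) (j : ℕ) (hj : j ≤ p - 1) :
    p ∣ ∑ i ∈ (Finset.range v).filter (fun i => i % p = j), dcount v X w i := by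
  classical
  haveI : Fact p.Prime := ⟨hp⟩
  haveI : NeZero p := ⟨hp.ne_zero⟩
  have hp2 := hp.two_le
  have hjp : j < p := by omega
  have step1 : ∑ i ∈ (Finset.range v).filter (fun i => i % p = j), dcount v X w i
      = X.countP (fun π => ((π.symm w : ℕ)) % p = j) := by
    unfold dcount
    have h0 := countP_sum ((Finset.range v).filter (fun i => i % p = j)) X
      (fun i π => ∃ q : Fin v, (q : ℕ) = i ∧ π q = w)
    rw [h0, countP_eq]
    congr 1
    apply Multiset.map_congr rfl
    intro π _
    have hpred : ∀ i ∈ (Finset.range v).filter (fun i => i % p = j),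
        ((∃ q : Fin v, (q : ℕ) = i ∧ π q = w) ↔ ((π.symm w : ℕ) = i)) := by
      intro i _
      constructor
      · rintro ⟨q, rfl, hq⟩
        rw [← hq, Equiv.symm_apply_apply]
      · rintro rfl
        exact ⟨π.symm w, rfl, Equiv.apply_symm_apply π w⟩
    rw [Finset.filter_congr hpred, Finset.filter_eq]
    by_cases hcase : (π.symm w : ℕ) % p = j
    · rw [if_pos, Finset.card_singleton, if_pos hcase]
      rw [Finset.mem_filter, Finset.mem_range]
      exact ⟨(π.symm w).2, hcase⟩
    · rw [if_neg, Finset.card_empty, if_neg hcase]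
      rw [Finset.mem_filter, Finset.mem_range]
      tauto
  rw [step1, ← ZMod.natCast_eq_zero_iff]
  have claimA : ∀ a, a < p →
      ((∑ r ∈ Finset.range p, X.countP (fun π => ((π.symm w : ℕ)) % p = r) * r.choose a : ℕ) :
        ZMod p) = 0 := by
    intro a hap
    have hswap := countP_mul_sum (Finset.range p) X
      (fun r π => ((π.symm w : ℕ)) % p = r) (fun r => r.choose a)
    have hper : (X.map fun π => ∑ r ∈ (Finset.range p).filter
        (fun r => ((π.symm w : ℕ)) % p = r), r.choose a)
        = X.map (fun π => ((π.symm w : ℕ) % p).choose a) := by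
      apply Multiset.map_congr rfl
      intro π _
      rw [Finset.filter_eq, if_pos (Finset.mem_range.mpr (Nat.mod_lt _ hp.pos)),
        Finset.sum_singleton]
    have hlucas : (X.map fun π => (((((π.symm w : ℕ) % p).choose a : ℕ)) : ZMod p)).sum
        = (X.map fun π => ((((π.symm w : ℕ)).choose a : ℕ) : ZMod p)).sum := by
      congr 1
      apply Multiset.map_congr rfl
      intro π _
      exact (lucas_small hap _).symm
    have hDC := DC htv X hX w a hap
    rw [hswap, hper, Nat.cast_multiset_sum, Multiset.map_map]
    simp only [Function.comp_def]
    rw [hlucas]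
    have hback : (X.map fun π => ((((π.symm w : ℕ)).choose a : ℕ) : ZMod p)).sum
        = ((X.map fun π => ((π.symm w : ℕ)).choose a).sum : ZMod p) := by
      rw [Nat.cast_multiset_sum, Multiset.map_map]
      simp only [Function.comp_def]
    rw [hback, hDC]
    rcases eq_or_lt_of_le (show a + 1 ≤ p by omega) with heq | hlt
    · have hd : p ∣ (v-1).descFactorial a := by
        have ha : a = p - 1 := by omega
        rw [ha]
        exact dvd_descFactorial hp.pos hpv htv
      rw [Nat.cast_mul, (ZMod.natCast_eq_zero_iff _ _).mpr hd, zero_mul]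
    · have hd : p ∣ l * ∏ y ∈ Finset.Icc (a+2) p, y := by
        refine Dvd.dvd.mul_left ?_ l
        refine Finset.dvd_prod_of_mem _ ?_
        rw [Finset.mem_Icc]
        omega
      rw [Nat.cast_mul, (ZMod.natCast_eq_zero_iff _ _).mpr hd, mul_zero]
  have claimB : ∀ n r, p ≤ r + n → r < p →
      ((X.countP (fun π => ((π.symm w : ℕ)) % p = r) : ℕ) : ZMod p) = 0 := by
    intro n
    induction n with
    | zero => intro r h hr; omega
    | succ n ih =>
      intro r hrn hrp
      have hA := claimA r hrp
      rw [Nat.cast_sum] at hA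
      have hsingle : ∑ x ∈ Finset.range p,
          ((X.countP (fun π => ((π.symm w : ℕ)) % p = x) * x.choose r : ℕ) : ZMod p)
          = ((X.countP (fun π => ((π.symm w : ℕ)) % p = r) * r.choose r : ℕ) : ZMod p) := by
        apply Finset.sum_eq_single_of_mem r (Finset.mem_range.mpr hrp)
        intro x hx hxr
        rcases lt_or_gt_of_ne hxr with hlt | hgt
        · rw [Nat.choose_eq_zero_of_lt hlt, mul_zero, Nat.cast_zero]
        · rw [Nat.cast_mul, ih x (by omega) (Finset.mem_range.mp hx), zero_mul]
      rw [hsingle] at hA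
      rw [Nat.choose_self, mul_one] at hA
      exact hA
  exact claimB p j (by omega) hjp
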